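/- Fix a simple graph G on a vertex type V and a symmetric edge-weight function w : V → V → ℝ≥0, and fix a source set S ⊆ V. Let R ⊆ V satisfy S ⊆ R. Then for every vertex v ∉ R, the weighted distance satisfies d_w(S, v) ≥ θ_R, where θ_R = ⨅_{v' ∉ R} D_R(v') is the frontier bound of R. (Every walk from S to a vertex outside R must cross an edge from R to its complement, and edge weights are nonnegative.) -/

import Mathlib

open scoped ENNReal

/-- The weight of a walk: the sum of the edge weights along its darts. -/
noncomputable def walkWeight {V : Type*} (G : SimpleGraph V) (w : V → V → NNReal)
    {u v : V} (p : G.Walk u v) : ℝ≥0∞ :=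
  (p.darts.map fun d => (w d.toProd.1 d.toProd.2 : ℝ≥0∞)).sum

/-- The weighted distance from a source set `S` to a vertex `v`: the infimum of
the weights of all walks from some vertex of `S` to `v` (`∞` if there is none). -/
noncomputable def wdist {V : Type*} (G : SimpleGraph V) (w : V → V → NNReal)
    (S : Set V) (v : V) : ℝ≥0∞ :=
  ⨅ (s : V) (_ : s ∈ S) (p : G.Walk s v), walkWeight G w p

/-- The frontier value `D_R(v)` of a vertex `v ∉ R`. -/
noncomputable def frontierVal {V : Type*} (G : SimpleGraph V) (w : V → V → NNReal)
    (S R : Set V) (v : V) : ℝ≥0∞ :=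
  ⨅ (u : V) (_ : u ∈ R) (_ : G.Adj u v), (wdist G w S u + (w u v : ℝ≥0∞))

/-- The frontier bound `θ_R = ⨅_{v ∉ R} D_R(v)`. -/
noncomputable def frontierBound {V : Type*} (G : SimpleGraph V) (w : V → V → NNReal)
    (S R : Set V) : ℝ≥0∞ :=
  ⨅ (v : V) (_ : v ∉ R), frontierVal G w S R v

lemma walkWeight_cons {V : Type*} (G : SimpleGraph V) (w : V → V → NNReal)
    {u b v : V} (h : G.Adj u b) (q : G.Walk b v) :
    walkWeight G w (q.cons h) = (w u b : ℝ≥0∞) + walkWeight G w q := by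
  simp [walkWeight]

lemma walkWeight_concat {V : Type*} (G : SimpleGraph V) (w : V → V → NNReal)
    {s u b : V} (p : G.Walk s u) (h : G.Adj u b) :
    walkWeight G w (p.concat h) = walkWeight G w p + (w u b : ℝ≥0∞) := by
  simp [walkWeight, SimpleGraph.Walk.darts_concat]

lemma wdist_le_adj {V : Type*} (G : SimpleGraph V) (w : V → V → NNReal)
    (S : Set V) {u b : V} (h : G.Adj u b) :
    wdist G w S b ≤ wdist G w S u + (w u b : ℝ≥0∞) := by
  nth_rewrite 2 [wdist]
  simp only [ENNReal.iInf_add]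
  refine le_iInf fun s => le_iInf fun hs => le_iInf fun p => ?_
  calc wdist G w S b ≤ walkWeight G w (p.concat h) := by
        refine iInf_le_of_le s (iInf_le_of_le hs (iInf_le _ _))
    _ = walkWeight G w p + (w u b : ℝ≥0∞) := walkWeight_concat G w p h

lemma frontierBound_le_aux {V : Type*} (G : SimpleGraph V) (w : V → V → NNReal)
    (S R : Set V) {v : V} (hv : v ∉ R) :
    ∀ {u : V}, u ∈ R → ∀ p : G.Walk u v,
      frontierBound G w S R ≤ wdist G w S u + walkWeight G w p := by
  intro u hu p
  induction p with
  | nil => exact absurd hu hv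
  | @cons u b v h q ih =>
    rw [walkWeight_cons]
    by_cases hb : b ∈ R
    · calc frontierBound G w S R ≤ wdist G w S b + walkWeight G w q := ih hv hb
        _ ≤ (wdist G w S u + (w u b : ℝ≥0∞)) + walkWeight G w q :=
            add_le_add_left (wdist_le_adj G w S h) _
        _ = wdist G w S u + ((w u b : ℝ≥0∞) + walkWeight G w q) := by ring
    · calc frontierBound G w S R ≤ frontierVal G w S R b :=
            iInf_le_of_le b (iInf_le _ hb)
        _ ≤ wdist G w S u + (w u b : ℝ≥0∞) :=
            iInf_le_of_le u (iInf_le_of_le hu (iInf_le _ h))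
        _ ≤ wdist G w S u + ((w u b : ℝ≥0∞) + walkWeight G w q) := by
            rw [← add_assoc]; exact le_self_add

/-- if `S ⊆ R`, then for every vertex `v ∉ R` the weighted distance
`d_w(S, v)` is at least the frontier bound `θ_R`. -/
theorem wdist_ge_frontierBound {V : Type*} (G : SimpleGraph V) (w : V → V → NNReal)
    (hw : ∀ u v, w u v = w v u) (S R : Set V) (hSR : S ⊆ R) :
    ∀ v ∉ R, wdist G w S v ≥ frontierBound G w S R := by
  intro v hv
  refine le_iInf fun s => le_iInf fun hs => le_iInf fun p => ?_
  have h0 : wdist G w S s = 0 := by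
    refine le_antisymm ?_ zero_le
    refine iInf_le_of_le s (iInf_le_of_le hs (iInf_le_of_le SimpleGraph.Walk.nil ?_))
    simp [walkWeight]
  calc frontierBound G w S R ≤ wdist G w S s + walkWeight G w p :=
        frontierBound_le_aux G w S R hv (hSR hs) p
    _ = walkWeight G w p := by rw [h0, zero_add]
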